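/- For all integers n−1 ≥ r ≥ 1, the reciprocal polynomials satisfy the linear recurrence J̄_n^{(r)}(q) = ∑_{j=1}^{n−r} [r]_q^j · q^{r(n−r−j)} · C(n−r,j) · J̄_{n−r}^{(j)}(q), whose coefficients lie in ℕ[q]. -/

import Mathlib

noncomputable section

/-- `[m]_q = 1 + q + ⋯ + q^{m-1}` as a polynomial in `q` (so `[0]_q = 0`). -/
def qNat (m : ℕ) : Polynomial ℚ := ∑ i ∈ Finset.range m, Polynomial.X ^ i

/-- The polynomials `J_n^{(r)}(q)`: `J_n^{(0)} = δ_{n,0}`, `J_r^{(r)} = 1` for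
`r ≥ 1`, and for `n > r ≥ 1` the recurrence
`J_n^{(r)} = ∑_{j=1}^{n−r} [r]_q^j q^{C(j,2)} C(n−r,j) J_{n−r}^{(j)}`.
(For `n < r` we set the unconstrained value `J_n^{(r)} = 0`.) -/
def J (n r : ℕ) : Polynomial ℚ :=
  if hr : r = 0 then (if n = 0 then 1 else 0)
  else if hn : n ≤ r then (if n = r then 1 else 0)
  else
    ∑ j ∈ Finset.Icc 1 (n - r),
      qNat r ^ j * Polynomial.X ^ j.choose 2 * ((n - r).choose j : Polynomial ℚ) * J (n - r) j
termination_by n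
decreasing_by omega


/-- The reciprocal polynomial `J̄_n^{(r)}(q) = q^{C(n−1,2)−C(r−1,2)} J_n^{(r)}(1/q)`,
i.e. the reflection of `J_n^{(r)}` at degree `C(n−1,2) − C(r−1,2)`. -/
def Jbar (n r : ℕ) : Polynomial ℚ :=
  Polynomial.reflect ((n - 1).choose 2 - (r - 1).choose 2) (J n r)

open Polynomial in
lemma reflect_sum' {s : Finset ℕ} (N : ℕ) (f : ℕ → Polynomial ℚ) :
    reflect N (∑ i ∈ s, f i) = ∑ i ∈ s, reflect N (f i) := by
  classical
  induction s using Finset.induction with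
  | empty => simp
  | insert _ _ h ih => simp [Finset.sum_insert h, Polynomial.reflect_add, ih]

lemma qNat_natDegree_le (r : ℕ) : (qNat r).natDegree ≤ r - 1 := by
  apply Polynomial.natDegree_sum_le_of_forall_le
  intro i hi
  simpa using Nat.le_sub_one_of_lt (Finset.mem_range.mp hi)

open Polynomial in
lemma qNat_reflect (r : ℕ) (hr : 1 ≤ r) : reflect (r - 1) (qNat r) = qNat r := by
  unfold qNat
  rw [reflect_sum']
  rw [← Finset.sum_range_reflect (fun i => reflect (r-1) ((X : Polynomial ℚ) ^ i)) r]
  apply Finset.sum_congr rfl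
  intro i hi
  rw [reflect_monomial, revAt_le (by omega : r - 1 - i ≤ r - 1)]
  congr 1
  have := Finset.mem_range.mp hi
  omega

open Polynomial in
lemma qNat_pow_reflect (r j : ℕ) (hr : 1 ≤ r) :
    reflect (j * (r - 1)) (qNat r ^ j) = qNat r ^ j := by
  induction j with
  | zero => simpa using reflect_one 0
  | succ k ih =>
      have h1 : (qNat r ^ k).natDegree ≤ k * (r - 1) :=
        le_trans natDegree_pow_le (by nlinarith [qNat_natDegree_le r])
      have h2 : (k+1) * (r-1) = k * (r-1) + (r-1) := by ring
      rw [h2, pow_succ, reflect_mul _ _ h1 (qNat_natDegree_le r), ih, qNat_reflect r hr]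

lemma choose_two_succ (k : ℕ) : (k+1).choose 2 = k.choose 2 + k := by
  rw [Nat.choose_succ_succ]; simp [Nat.choose_one_right]; omega

lemma add_choose_two (a b : ℕ) : (a+b).choose 2 = a.choose 2 + b.choose 2 + a*b := by
  induction b with
  | zero => simp
  | succ k ih =>
      have : a + (k+1) = (a+k) + 1 := by ring
      rw [this, choose_two_succ, ih, choose_two_succ, Nat.mul_succ]
      omega

lemma key_split (m r : ℕ) (hm : 1 ≤ m) (hr : 1 ≤ r) :
    (m + r - 1).choose 2 + 1 = (r-1).choose 2 + (m-1).choose 2 + m*r := by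
  obtain ⟨m', rfl⟩ := Nat.exists_eq_add_of_le hm
  obtain ⟨r', rfl⟩ := Nat.exists_eq_add_of_le hr
  have h1 : 1 + m' + (1 + r') - 1 = m' + (r' + 1) := by omega
  rw [h1, add_choose_two]
  have h2 : 1 + m' - 1 = m' := by omega
  have h3 : 1 + r' - 1 = r' := by omega
  rw [h2, h3, choose_two_succ]
  have : (1 + m') * (1 + r') = m' * (r'+1) + r' + 1 := by ring
  omega

lemma arith (m r j : ℕ) (hr : 1 ≤ r) (hj : 1 ≤ j) (hjm : j ≤ m) :
    (m + r - 1).choose 2 - (r-1).choose 2 =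
      j * (r - 1) + (r * (m - j) + j.choose 2) + ((m-1).choose 2 - (j-1).choose 2) := by
  have hmono : (j-1).choose 2 ≤ (m-1).choose 2 := Nat.choose_le_choose 2 (by omega)
  have hk := key_split m r (le_trans hj hjm) hr
  have hcj : j.choose 2 = (j-1).choose 2 + (j-1) := by
    have : j = (j-1) + 1 := by omega
    rw [this, choose_two_succ]; simp
  have hprod : j * (r-1) + r * (m-j) + (j-1) + 1 = m * r := by
    obtain ⟨j', rfl⟩ := Nat.exists_eq_add_of_le hj
    obtain ⟨r', rfl⟩ := Nat.exists_eq_add_of_le hr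
    obtain ⟨d, rfl⟩ := Nat.exists_eq_add_of_le hjm
    have h1 : 1 + r' - 1 = r' := by omega
    have h2 : 1 + j' + d - (1 + j') = d := by omega
    have h3 : 1 + j' - 1 = j' := by omega
    rw [h1, h2, h3]; ring
  rw [hcj]
  generalize j * (r-1) = p1 at hprod ⊢
  generalize r * (m-j) = p2 at hprod ⊢
  generalize m * r = p3 at hprod hk ⊢
  omega

lemma J_deg (n : ℕ) : ∀ r, 1 ≤ r → r ≤ n →
    (J n r).natDegree + (r-1).choose 2 ≤ (n-1).choose 2 := by
  induction n using Nat.strong_induction_on with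
  | _ n ih =>
    intro r hr hrn
    have hmono : (r-1).choose 2 ≤ (n-1).choose 2 := Nat.choose_le_choose 2 (by omega)
    rcases eq_or_lt_of_le hrn with heq | hlt
    · rw [J, dif_neg (by omega), dif_pos (by omega), if_pos heq.symm]
      simpa using hmono
    · rw [J, dif_neg (by omega), dif_neg (by omega)]
      set m := n - r with hm
      have hsum : (∑ j ∈ Finset.Icc 1 m,
          qNat r ^ j * Polynomial.X ^ j.choose 2 * ((m.choose j : ℕ) : Polynomial ℚ) * J m j).natDegree
          ≤ (n-1).choose 2 - (r-1).choose 2 := by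
        apply Polynomial.natDegree_sum_le_of_forall_le
        intro j hj
        obtain ⟨hj1, hj2⟩ := Finset.mem_Icc.mp hj
        have hJ : (J m j).natDegree + (j-1).choose 2 ≤ (m-1).choose 2 :=
          ih m (by omega) j hj1 hj2
        have harith := arith m r j hr hj1 hj2
        have hmr : m + r - 1 = n - 1 := by omega
        rw [hmr] at harith
        have h1 : (qNat r ^ j).natDegree ≤ j * (r-1) :=
          le_trans Polynomial.natDegree_pow_le (by nlinarith [qNat_natDegree_le r])
        calc (qNat r ^ j * Polynomial.X ^ j.choose 2 * ((m.choose j : ℕ) : Polynomial ℚ) * J m j).natDegree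
            ≤ (qNat r ^ j * Polynomial.X ^ j.choose 2 * ((m.choose j : ℕ) : Polynomial ℚ)).natDegree
              + (J m j).natDegree := Polynomial.natDegree_mul_le
          _ ≤ ((qNat r ^ j * Polynomial.X ^ j.choose 2).natDegree
              + ((m.choose j : ℕ) : Polynomial ℚ).natDegree) + (J m j).natDegree := by
              gcongr; exact Polynomial.natDegree_mul_le
          _ ≤ ((qNat r ^ j).natDegree + (Polynomial.X ^ j.choose 2 : Polynomial ℚ).natDegree
              + 0) + (J m j).natDegree := by
              gcongr
              · exact Polynomial.natDegree_mul_le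
              · exact le_of_eq (Polynomial.natDegree_natCast _)
          _ ≤ (j * (r-1) + j.choose 2 + 0) + (J m j).natDegree := by
              gcongr
              exact le_of_eq (Polynomial.natDegree_X_pow _)
          _ ≤ (n-1).choose 2 - (r-1).choose 2 := by
              generalize j * (r-1) = p1 at harith ⊢
              generalize r * (m-j) = p2 at harith ⊢
              omega
      omega

open Polynomial in
/-- for `n − 1 ≥ r ≥ 1`, the reciprocal polynomials satisfy
`J̄_n^{(r)} = ∑_{j=1}^{n−r} [r]_q^j q^{r(n−r−j)} C(n−r,j) J̄_{n−r}^{(j)}`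
(whose coefficients lie in `ℕ[q]`). -/
theorem Jbar_recurrence (n r : ℕ) (hr : 1 ≤ r) (hrn : r + 1 ≤ n) :
    Jbar n r =
      ∑ j ∈ Finset.Icc 1 (n - r),
        qNat r ^ j * Polynomial.X ^ (r * (n - r - j)) * ((n - r).choose j : Polynomial ℚ) *
          Jbar (n - r) j := by
  rw [Jbar, J, dif_neg (by omega), dif_neg (by omega), reflect_sum']
  apply Finset.sum_congr rfl
  intro j hj
  obtain ⟨hj1, hj2⟩ := Finset.mem_Icc.mp hj
  set m := n - r with hm
  set c : ℚ := (m.choose j : ℚ) with hc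
  have hmr : m + r - 1 = n - 1 := by omega
  have harith := arith m r j hr hj1 hj2
  rw [hmr] at harith
  have hJdeg : (J m j).natDegree ≤ (m-1).choose 2 - (j-1).choose 2 := by
    have := J_deg m j hj1 hj2
    omega
  have hF : (qNat r ^ j * Polynomial.X ^ j.choose 2 * ((m.choose j : ℕ) : Polynomial ℚ)).natDegree
      ≤ j * (r-1) + (r * (m-j) + j.choose 2) := by
    calc (qNat r ^ j * Polynomial.X ^ j.choose 2 * ((m.choose j : ℕ) : Polynomial ℚ)).natDegree
        ≤ (qNat r ^ j * Polynomial.X ^ j.choose 2).natDegree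
          + ((m.choose j : ℕ) : Polynomial ℚ).natDegree := Polynomial.natDegree_mul_le
      _ ≤ ((qNat r ^ j).natDegree + (Polynomial.X ^ j.choose 2 : Polynomial ℚ).natDegree) + 0 := by
          gcongr
          · exact Polynomial.natDegree_mul_le
          · exact le_of_eq (Polynomial.natDegree_natCast _)
      _ ≤ (j * (r-1) + j.choose 2) + 0 := by
          gcongr
          · exact le_trans Polynomial.natDegree_pow_le (by nlinarith [qNat_natDegree_le r])
          · exact le_of_eq (Polynomial.natDegree_X_pow _)
      _ ≤ j * (r-1) + (r * (m-j) + j.choose 2) := by omega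
  rw [harith, reflect_mul _ _ hF hJdeg]
  have hsplit : qNat r ^ j * Polynomial.X ^ j.choose 2 * ((m.choose j : ℕ) : Polynomial ℚ)
      = Polynomial.C c * (qNat r ^ j * Polynomial.X ^ j.choose 2) := by
    rw [hc, Polynomial.C_eq_natCast]; ring
  rw [hsplit, reflect_C_mul,
      reflect_mul _ _ (le_trans Polynomial.natDegree_pow_le
        (by nlinarith [qNat_natDegree_le r]) : (qNat r ^ j).natDegree ≤ j * (r-1))
        (by simpa [Polynomial.natDegree_X_pow] using Nat.le_add_left (j.choose 2) (r*(m-j)) :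
          ((Polynomial.X : Polynomial ℚ) ^ j.choose 2).natDegree ≤ r * (m-j) + j.choose 2),
      qNat_pow_reflect r j hr, reflect_monomial,
      revAt_le (by omega : j.choose 2 ≤ r * (m-j) + j.choose 2)]
  have he : r * (m - j) + j.choose 2 - j.choose 2 = r * (m-j) := by omega
  rw [he, Jbar, hc, Polynomial.C_eq_natCast]
  ring

end
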